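/- Let b > 1 be a real number, σ₁ > σ₁' > 0 real numbers, and γ₀, γ₁ ≥ 0 integers. Then there exists a constant Č > 0, depending only on γ₀, γ₁, σ₁ and σ₁' (independent of ε, β, τ, c and v), such that the following holds: for every ε ∈ ℂ with ε ≠ 0, every integer β ≥ 0, every real N ≥ 0, all τ, c ∈ ℂ with |c| ≤ |τ|, and every function v : ℂ → ℂ with u ↦ v(uc) and u ↦ v((1−u)c + uτ) continuous on [0,1], satisfying |v(s)| ≤ N |s| exp((σ₁'/|ε|) r_b(β) |s|) at every point s = uc and s = (1−u)c + uτ with u ∈ [0,1], one has |τ| · | c ∫_0^1 (τ − uc)^{γ₀} (uc)^{γ₁} v(uc) du + (τ − c) ∫_0^1 (τ − ((1−u)c + uτ))^{γ₀} ((1−u)c + uτ)^{γ₁} v((1−u)c + uτ) du | ≤ Č |ε|^{γ₀+γ₁+2} N |τ| exp((σ₁/|ε|) r_b(β) |τ|). -/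

import Mathlib

/-- `r_b(β) = Σ_{n=0}^{β} 1/(n+1)^b`. -/
noncomputable def rb (b : ℝ) (β : ℕ) : ℝ := ∑ n ∈ Finset.range (β + 1), 1 / ((n : ℝ) + 1) ^ b

lemma pow_le_factorial_mul_exp (x : ℝ) (hx : 0 ≤ x) (k : ℕ) :
    x ^ k ≤ k.factorial * Real.exp x := by
  have h := Real.sum_le_exp_of_nonneg hx (k + 1)
  have h1 : x ^ k / k.factorial ≤ ∑ i ∈ Finset.range (k + 1), x ^ i / i.factorial := by
    refine Finset.single_le_sum (f := fun i => x ^ i / (i.factorial : ℝ)) ?_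
      (Finset.self_mem_range_succ k)
    intro i _; positivity
  have hk : (0:ℝ) < k.factorial := by positivity
  calc x ^ k = (x ^ k / k.factorial) * k.factorial := by field_simp
    _ ≤ Real.exp x * k.factorial := mul_le_mul_of_nonneg_right (h1.trans h) hk.le
    _ = k.factorial * Real.exp x := mul_comm _ _

/-- Convolution bound along the piecewise-linear path `L_{0,τ} = [0,c] ∪ [c,τ]` with
`|c| ≤ |τ|`; the two integrals are parametrized by `s = uc` and `s = (1-u)c + uτ`,
`u ∈ [0,1]`.  The constant `Cc` depends only on `γ₀, γ₁, σ₁, σ₁'`; it is independent of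
`b, ε, β, τ, c, v`. -/
theorem stmt14 (σ₁ σ₁' : ℝ) (hσ₁' : 0 < σ₁') (hσ₁ : σ₁' < σ₁) (γ₀ γ₁ : ℕ) :
    ∃ Cc : ℝ, 0 < Cc ∧ ∀ b : ℝ, 1 < b →
      ∀ (ε : ℂ), ε ≠ 0 → ∀ β : ℕ, ∀ N : ℝ, 0 ≤ N →
      ∀ τ c : ℂ, ‖c‖ ≤ ‖τ‖ →
      ∀ v : ℂ → ℂ,
        ContinuousOn (fun u : ℝ => v ((u : ℂ) * c)) (Set.Icc 0 1) →
        ContinuousOn (fun u : ℝ => v ((1 - (u : ℂ)) * c + (u : ℂ) * τ)) (Set.Icc 0 1) →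
        (∀ u : ℝ, u ∈ Set.Icc (0 : ℝ) 1 →
          ‖v ((u : ℂ) * c)‖ ≤ N * ‖(u : ℂ) * c‖ *
            Real.exp (σ₁' / ‖ε‖ * rb b β * ‖(u : ℂ) * c‖)) →
        (∀ u : ℝ, u ∈ Set.Icc (0 : ℝ) 1 →
          ‖v ((1 - (u : ℂ)) * c + (u : ℂ) * τ)‖ ≤
            N * ‖(1 - (u : ℂ)) * c + (u : ℂ) * τ‖ *
              Real.exp (σ₁' / ‖ε‖ * rb b β *
                ‖(1 - (u : ℂ)) * c + (u : ℂ) * τ‖)) →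
        ‖τ‖ * ‖c * (∫ u in (0 : ℝ)..1,
               (τ - (u : ℂ) * c) ^ γ₀ * ((u : ℂ) * c) ^ γ₁ * v ((u : ℂ) * c))
             + (τ - c) * (∫ u in (0 : ℝ)..1,
               (τ - ((1 - (u : ℂ)) * c + (u : ℂ) * τ)) ^ γ₀ *
                 ((1 - (u : ℂ)) * c + (u : ℂ) * τ) ^ γ₁ *
                 v ((1 - (u : ℂ)) * c + (u : ℂ) * τ))‖ ≤
          Cc * ‖ε‖ ^ (γ₀ + γ₁ + 2) * N * ‖τ‖ *
            Real.exp (σ₁ / ‖ε‖ * rb b β * ‖τ‖) := by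
  have hd : (0:ℝ) < σ₁ - σ₁' := sub_pos.2 hσ₁
  refine ⟨3 * 2 ^ γ₀ * ((γ₀ + γ₁ + 2).factorial : ℝ) / (σ₁ - σ₁') ^ (γ₀ + γ₁ + 2),
    by positivity, ?_⟩
  intro b hb ε hε β N hN τ c hcτ v hv1 hv2 hB1 hB2
  have hεa : (0:ℝ) < ‖ε‖ := norm_pos_iff.mpr hε
  set T := ‖τ‖ with hTdef
  have hT0 : (0:ℝ) ≤ T := norm_nonneg τ
  have hrb0 : (0:ℝ) ≤ rb b β := Finset.sum_nonneg fun n _ => by positivity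
  have hrb1 : (1:ℝ) ≤ rb b β := by
    have h0 : 1 / ((((0:ℕ):ℝ)) + 1) ^ b = 1 := by
      norm_num [Real.one_rpow]
    rw [rb]
    calc (1:ℝ) = 1 / ((((0:ℕ):ℝ)) + 1) ^ b := h0.symm
      _ ≤ ∑ n ∈ Finset.range (β + 1), 1 / ((n:ℝ) + 1) ^ b :=
        Finset.single_le_sum (f := fun n : ℕ => 1 / ((n:ℝ) + 1) ^ b)
          (fun i _ => by positivity) (Finset.mem_range.2 (Nat.succ_pos β))
  set a := σ₁' / ‖ε‖ * rb b β with hadef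
  have ha0 : 0 ≤ a := by positivity
  set E := Real.exp (a * T) with hEdef
  have hE0 : 0 < E := Real.exp_pos _
  set M := 2 ^ γ₀ * T ^ (γ₀ + γ₁) * (N * T * E) with hMdef
  have hM0 : 0 ≤ M := by positivity
  -- points on the path are within distance T of the origin
  have hs1 : ∀ u : ℝ, u ∈ Set.Icc (0:ℝ) 1 → ‖(u:ℂ) * c‖ ≤ T := by
    intro u hu
    rw [norm_mul, Complex.norm_real, Real.norm_eq_abs]
    calc |u| * ‖c‖ ≤ 1 * ‖τ‖ := by
          refine mul_le_mul (abs_le.2 ⟨by linarith [hu.1], hu.2⟩) hcτ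
            (norm_nonneg c) one_pos.le
      _ = T := one_mul T
  have hs2 : ∀ u : ℝ, u ∈ Set.Icc (0:ℝ) 1 →
      ‖(1 - (u:ℂ)) * c + (u:ℂ) * τ‖ ≤ T := by
    intro u hu
    obtain ⟨h0, h1⟩ := hu
    calc ‖(1 - (u:ℂ)) * c + (u:ℂ) * τ‖
        ≤ ‖(1 - (u:ℂ)) * c‖ + ‖(u:ℂ) * τ‖ := norm_add_le _ _
      _ = (1 - u) * ‖c‖ + u * T := by
          rw [norm_mul, norm_mul]
          have hcast : (1 - (u:ℂ)) = (((1 - u : ℝ)):ℂ) := by push_cast; ring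
          rw [hcast, Complex.norm_real, Complex.norm_real, Real.norm_eq_abs, Real.norm_eq_abs,
            abs_of_nonneg (by linarith : (0:ℝ) ≤ 1 - u), abs_of_nonneg h0]
      _ ≤ (1 - u) * T + u * T := by
          have := mul_le_mul_of_nonneg_left hcτ (by linarith : (0:ℝ) ≤ 1 - u)
          linarith
      _ = T := by ring
  have hts : ∀ s : ℂ, ‖s‖ ≤ T → ‖τ - s‖ ≤ 2 * T := by
    intro s hs
    have h : ‖τ - s‖ ≤ ‖τ‖ + ‖s‖ := norm_sub_le τ s
    have hTs : ‖τ‖ = T := rfl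
    linarith [hTs ▸ h]
  -- bound on |v s| at path points
  have hvb : ∀ s : ℂ, ‖s‖ ≤ T →
      ‖v s‖ ≤ N * ‖s‖ * Real.exp (a * ‖s‖) →
      ‖v s‖ ≤ N * T * E := by
    intro s hsT hvs
    refine hvs.trans ?_
    rw [hEdef]
    gcongr
  -- bound the two integrals
  have key : ∀ s : ℂ, ‖s‖ ≤ T → ‖v s‖ ≤ N * T * E →
      ‖(τ - s) ^ γ₀ * s ^ γ₁ * v s‖ ≤ M := by
    intro s hsT hvs
    rw [norm_mul, norm_mul, norm_pow, norm_pow]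
    calc ‖τ - s‖ ^ γ₀ * ‖s‖ ^ γ₁ * ‖v s‖
        ≤ (2 * T) ^ γ₀ * T ^ γ₁ * (N * T * E) := by
          refine mul_le_mul (mul_le_mul (pow_le_pow_left₀ (norm_nonneg _) (hts s hsT) _)
            (pow_le_pow_left₀ (norm_nonneg _) hsT _) (by positivity) (by positivity))
            hvs (norm_nonneg _) (by positivity)
      _ = M := by rw [hMdef]; rw [mul_pow, pow_add]; ring
  set I1 : ℂ := ∫ u in (0:ℝ)..1,
      (τ - (u:ℂ) * c) ^ γ₀ * ((u:ℂ) * c) ^ γ₁ * v ((u:ℂ) * c) with hI1def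
  set I2 : ℂ := ∫ u in (0:ℝ)..1,
      (τ - ((1 - (u:ℂ)) * c + (u:ℂ) * τ)) ^ γ₀ * ((1 - (u:ℂ)) * c + (u:ℂ) * τ) ^ γ₁ *
        v ((1 - (u:ℂ)) * c + (u:ℂ) * τ) with hI2def
  have hI1 : ‖I1‖ ≤ M := by
    rw [hI1def]
    have := intervalIntegral.norm_integral_le_of_norm_le_const (a := (0:ℝ)) (b := 1) (C := M)
      (f := fun u : ℝ => (τ - (u:ℂ) * c) ^ γ₀ * ((u:ℂ) * c) ^ γ₁ * v ((u:ℂ) * c)) ?_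
    · simpa using this
    · intro u hu
      have hu' : u ∈ Set.Icc (0:ℝ) 1 := by
        rw [Set.uIoc_of_le (by norm_num : (0:ℝ) ≤ 1)] at hu
        exact Set.Ioc_subset_Icc_self hu
      exact key _ (hs1 u hu') (hvb _ (hs1 u hu') (hB1 u hu'))
  have hI2 : ‖I2‖ ≤ M := by
    rw [hI2def]
    have := intervalIntegral.norm_integral_le_of_norm_le_const (a := (0:ℝ)) (b := 1) (C := M)
      (f := fun u : ℝ => (τ - ((1 - (u:ℂ)) * c + (u:ℂ) * τ)) ^ γ₀ *
        ((1 - (u:ℂ)) * c + (u:ℂ) * τ) ^ γ₁ * v ((1 - (u:ℂ)) * c + (u:ℂ) * τ)) ?_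
    · simpa using this
    · intro u hu
      have hu' : u ∈ Set.Icc (0:ℝ) 1 := by
        rw [Set.uIoc_of_le (by norm_num : (0:ℝ) ≤ 1)] at hu
        exact Set.Ioc_subset_Icc_self hu
      exact key _ (hs2 u hu') (hvb _ (hs2 u hu') (hB2 u hu'))
  have hτc : ‖τ - c‖ ≤ 2 * T := hts c hcτ
  have hsum : ‖c * I1 + (τ - c) * I2‖ ≤ 3 * T * M := by
    calc ‖c * I1 + (τ - c) * I2‖
        ≤ ‖c * I1‖ + ‖(τ - c) * I2‖ := norm_add_le _ _
      _ = ‖c‖ * ‖I1‖ + ‖τ - c‖ * ‖I2‖ := by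
          rw [norm_mul, norm_mul]
      _ ≤ T * M + (2 * T) * M := add_le_add
          (mul_le_mul hcτ hI1 (norm_nonneg _) hT0)
          (mul_le_mul hτc hI2 (norm_nonneg _) (by linarith))
      _ = 3 * T * M := by ring
  -- the key scalar estimate
  set δ := (σ₁ - σ₁') / ‖ε‖ * rb b β with hδdef
  have hδ0 : 0 < δ := mul_pos (div_pos hd hεa) (lt_of_lt_of_le one_pos hrb1)
  have hkey : T ^ (γ₀ + γ₁ + 2) ≤ ((γ₀ + γ₁ + 2).factorial : ℝ) / (σ₁ - σ₁') ^ (γ₀ + γ₁ + 2)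
      * ‖ε‖ ^ (γ₀ + γ₁ + 2) * Real.exp (δ * T) := by
    set k := γ₀ + γ₁ + 2 with hkdef
    have h1 : (δ * T) ^ k ≤ (k.factorial : ℝ) * Real.exp (δ * T) :=
      pow_le_factorial_mul_exp _ (by positivity) k
    have hδk : (0:ℝ) < δ ^ k := pow_pos hδ0 k
    have h2 : T ^ k ≤ (k.factorial : ℝ) * Real.exp (δ * T) / δ ^ k := by
      rw [le_div_iff₀ hδk]
      calc T ^ k * δ ^ k = (δ * T) ^ k := by rw [← mul_pow]; ring_nf
        _ ≤ _ := h1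
    refine h2.trans ?_
    have h3 : (σ₁ - σ₁') ^ k ≤ (‖ε‖ * δ) ^ k := by
      apply pow_le_pow_left₀ hd.le
      have heq : ‖ε‖ * δ = (σ₁ - σ₁') * rb b β := by
        rw [hδdef]; field_simp
      rw [heq]
      nlinarith
    have h4 : 1 / δ ^ k ≤ ‖ε‖ ^ k / (σ₁ - σ₁') ^ k := by
      rw [div_le_div_iff₀ hδk (pow_pos hd k), one_mul, ← mul_pow]
      exact h3
    calc (k.factorial : ℝ) * Real.exp (δ * T) / δ ^ k
        = (k.factorial : ℝ) * Real.exp (δ * T) * (1 / δ ^ k) := by ring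
      _ ≤ (k.factorial : ℝ) * Real.exp (δ * T) * (‖ε‖ ^ k / (σ₁ - σ₁') ^ k) := by
          refine mul_le_mul_of_nonneg_left h4 (by positivity)
      _ = (k.factorial : ℝ) / (σ₁ - σ₁') ^ k * ‖ε‖ ^ k * Real.exp (δ * T) := by
          ring
  have hexp : E * Real.exp (δ * T) = Real.exp (σ₁ / ‖ε‖ * rb b β * T) := by
    rw [hEdef, ← Real.exp_add]
    congr 1
    rw [hadef, hδdef]
    field_simp
    ring
  calc T * ‖c * I1 + (τ - c) * I2‖
      ≤ T * (3 * T * M) := mul_le_mul_of_nonneg_left hsum hT0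
    _ = 3 * 2 ^ γ₀ * N * T * (T ^ (γ₀ + γ₁ + 2) * E) := by
        rw [hMdef]; ring
    _ ≤ 3 * 2 ^ γ₀ * N * T *
        ((((γ₀ + γ₁ + 2).factorial : ℝ) / (σ₁ - σ₁') ^ (γ₀ + γ₁ + 2)
          * ‖ε‖ ^ (γ₀ + γ₁ + 2) * Real.exp (δ * T)) * E) := by
        have h5 : (0:ℝ) ≤ 3 * 2 ^ γ₀ * N * T := by positivity
        refine mul_le_mul_of_nonneg_left ?_ h5
        exact mul_le_mul_of_nonneg_right hkey hE0.le
    _ = 3 * 2 ^ γ₀ * ((γ₀ + γ₁ + 2).factorial : ℝ) / (σ₁ - σ₁') ^ (γ₀ + γ₁ + 2)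
        * ‖ε‖ ^ (γ₀ + γ₁ + 2) * N * T * (E * Real.exp (δ * T)) := by ring
    _ = _ := by rw [hexp]
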